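/- arXiv:2102.12688 — 2 statements merged into one kernel-verified Lean document; each statement's English description precedes it below -/
import Mathlib

section
/- For a real number $q$ with $q > 0$ and $q \ne 1$, and for all integers $n \ge 1$ and $r \ge 1$, the $q$-hyperharmonic numbers satisfy $[n+r]_q\, H_n^{(r)}(q) = [n+1]_q\, H_{n+1}^{(r)}(q) - q^{n+r-1} \binom{n+r-1}{r-1}_q$. -/
/-- The `q`-integer `[n]_q = (1 - q^n)/(1 - q)`. -/
noncomputable def qint (q : ℝ) (n : ℕ) : ℝ := (1 - q ^ n) / (1 - q)

/-- The `q`-factorial `[n]_q! = [n]_q [n-1]_q ⋯ [1]_q`, with `[0]_q! = 1`. -/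
noncomputable def qfact (q : ℝ) : ℕ → ℝ
  | 0 => 1
  | n + 1 => qint q (n + 1) * qfact q n

/-- The `q`-binomial coefficient `C(n,k)_q = [n]_q!/([k]_q! [n-k]_q!)`, equal to `0` for `k > n`. -/
noncomputable def qbinom (q : ℝ) (n k : ℕ) : ℝ :=
  if k ≤ n then qfact q n / (qfact q k * qfact q (n - k)) else 0

/-- The `q`-hyperharmonic numbers: `H_n^{(0)}(q) = 1/(q [n]_q)` and
`H_n^{(r)}(q) = ∑_{j=1}^n q^j H_j^{(r-1)}(q)` for `r ≥ 1` (so `H_0^{(r)}(q) = 0`). -/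
noncomputable def qhyp (q : ℝ) : ℕ → ℕ → ℝ
  | 0, n => 1 / (q * qint q n)
  | r + 1, n => ∑ j ∈ Finset.Icc 1 n, q ^ j * qhyp q r j

section Helpers
variable {q : ℝ}

lemma one_sub_q_ne (hq1 : q ≠ 1) : (1 : ℝ) - q ≠ 0 := sub_ne_zero.mpr (Ne.symm hq1)

lemma qint_eq_sum (hq1 : q ≠ 1) (n : ℕ) : qint q n = ∑ i ∈ Finset.range n, q ^ i := by
  rw [geom_sum_eq hq1, qint, div_eq_div_iff (one_sub_q_ne hq1) (sub_ne_zero.mpr hq1)]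
  ring

lemma qint_pos (hq : 0 < q) (hq1 : q ≠ 1) {n : ℕ} (hn : 1 ≤ n) : 0 < qint q n := by
  rw [qint_eq_sum hq1]
  exact Finset.sum_pos (fun i _ => pow_pos hq i) ⟨0, Finset.mem_range.mpr hn⟩

lemma qfact_pos (hq : 0 < q) (hq1 : q ≠ 1) : ∀ n, 0 < qfact q n
  | 0 => one_pos
  | n + 1 => mul_pos (qint_pos hq hq1 (by omega)) (qfact_pos hq hq1 n)

lemma qfact_succ (n : ℕ) : qfact q (n + 1) = qint q (n + 1) * qfact q n := rfl

lemma qbinom_zero (hq : 0 < q) (hq1 : q ≠ 1) (n : ℕ) : qbinom q n 0 = 1 := by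
  simp [qbinom, qfact, (qfact_pos hq hq1 n).ne']

lemma qbinom_self (hq : 0 < q) (hq1 : q ≠ 1) (n : ℕ) : qbinom q n n = 1 := by
  simp [qbinom, qfact, Nat.sub_self, (qfact_pos hq hq1 n).ne']

lemma qint_add (hq1 : q ≠ 1) (a b : ℕ) :
    qint q (a + b) = qint q a + q ^ a * qint q b := by
  unfold qint
  rw [pow_add]
  field_simp
  ring

lemma qint_one (hq1 : q ≠ 1) : qint q 1 = 1 := by
  rw [qint, pow_one, div_self (one_sub_q_ne hq1)]

lemma qpascal (hq : 0 < q) (hq1 : q ≠ 1) (n s : ℕ) :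
    qbinom q (n + s + 2) (s + 1) =
      qbinom q (n + s + 1) (s + 1) + q ^ (n + 1) * qbinom q (n + s + 1) s := by
  rw [qbinom, qbinom, qbinom, if_pos (by omega : s + 1 ≤ n + s + 2),
    if_pos (by omega : s + 1 ≤ n + s + 1), if_pos (by omega : s ≤ n + s + 1),
    (by omega : n + s + 2 - (s + 1) = n + 1), (by omega : n + s + 1 - (s + 1) = n),
    (by omega : n + s + 1 - s = n + 1)]
  have f1 : qfact q (n + s + 2) = qint q (n + s + 2) * qfact q (n + s + 1) := rfl
  have hadd : qint q (n + s + 2) = qint q (n + 1) + q ^ (n + 1) * qint q (s + 1) := by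
    rw [show n + s + 2 = (n + 1) + (s + 1) by omega, qint_add hq1]
  rw [f1, qfact_succ n, qfact_succ s, hadd]
  have h1 := (qfact_pos hq hq1 n).ne'
  have h2 := (qfact_pos hq hq1 s).ne'
  have h3 := (qfact_pos hq hq1 (n + s + 1)).ne'
  have h4 := (qint_pos hq hq1 (show 1 ≤ n + 1 by omega)).ne'
  have h5 := (qint_pos hq hq1 (show 1 ≤ s + 1 by omega)).ne'
  field_simp

lemma qhyp_zero_right (r : ℕ) : qhyp q (r + 1) 0 = 0 := by
  simp [qhyp]

lemma qhyp_succ (r n : ℕ) :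
    qhyp q (r + 1) (n + 1) = qhyp q (r + 1) n + q ^ (n + 1) * qhyp q r (n + 1) := by
  rw [qhyp, qhyp]
  exact Finset.sum_Icc_succ_top (by omega) _

lemma qhyp_one (hq : 0 < q) (hq1 : q ≠ 1) : ∀ r, q * qhyp q r 1 = q ^ r
  | 0 => by
      show q * (1 / (q * qint q 1)) = q ^ 0
      rw [qint_one hq1, pow_zero, mul_one, mul_one_div, div_self hq.ne']
  | r + 1 => by
      have ih := qhyp_one hq hq1 r
      have h : qhyp q (r + 1) 1 = q ^ 1 * qhyp q r 1 := by
        rw [qhyp, Finset.Icc_self, Finset.sum_singleton]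
      rw [h, pow_one]
      calc q * (q * qhyp q r 1) = q * q ^ r := by rw [ih]
        _ = q ^ (r + 1) := by ring

lemma keyP (hq : 0 < q) (hq1 : q ≠ 1) : ∀ s n : ℕ,
    qint q (n + s + 1) * qhyp q (s + 1) n =
      qint q (n + 1) * qhyp q (s + 1) (n + 1) - q ^ (n + s) * qbinom q (n + s) s := by
  intro s
  induction s with
  | zero =>
    intro n
    show qint q (n + 1) * qhyp q 1 n =
      qint q (n + 1) * qhyp q 1 (n + 1) - q ^ n * qbinom q n 0
    have hs : qhyp q 1 (n + 1) = qhyp q 1 n + q ^ (n + 1) * qhyp q 0 (n + 1) :=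
      qhyp_succ 0 n
    have h0 : qhyp q 0 (n + 1) = 1 / (q * qint q (n + 1)) := rfl
    rw [hs, h0, qbinom_zero hq hq1]
    have h1 := (qint_pos hq hq1 (show 1 ≤ n + 1 by omega)).ne'
    field_simp
    ring
  | succ s ih =>
    have hA : ∀ n, qint q (n + 1) * qhyp q (s + 1) (n + 1) =
        qint q (s + 1) * qhyp q (s + 2) n + q ^ s * qbinom q (n + s + 1) (s + 1) := by
      intro n
      induction n with
      | zero =>
        simp only [Nat.zero_add]
        rw [qint_one hq1, qhyp_zero_right, qbinom_self hq hq1, one_mul, mul_zero,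
          zero_add, mul_one]
        have h := qhyp_one hq hq1 (s + 1)
        have : qhyp q (s + 1) 1 = q ^ (s + 1) / q := by
          field_simp at h ⊢; linarith [h]
        rw [this, pow_succ, mul_div_assoc, div_self hq.ne', mul_one]
      | succ n ihn =>
        have hP := ih (n + 1)
        rw [show n + 1 + s = n + s + 1 by omega] at hP
        -- hP : qint q (n+s+1+1) * qhyp q (s+1) (n+1)
        --      = qint q (n+2) * qhyp q (s+1) (n+2) - q^(n+s+1) * qbinom q (n+s+1) s
        have hs2 : qhyp q (s + 2) (n + 1) =
            qhyp q (s + 2) n + q ^ (n + 1) * qhyp q (s + 1) (n + 1) := qhyp_succ (s + 1) n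
        have hpas := qpascal hq hq1 n s
        have hadd : qint q (n + s + 1 + 1) = qint q (n + 1) + q ^ (n + 1) * qint q (s + 1) := by
          rw [show n + s + 1 + 1 = (n + 1) + (s + 1) by omega, qint_add hq1]
        have hgoal : qint q (n + 1 + 1) * qhyp q (s + 1) (n + 1 + 1) =
            qint q (s + 1) * qhyp q (s + 2) (n + 1) +
              q ^ s * qbinom q (n + 1 + s + 1) (s + 1) := by
          rw [show n + 1 + s + 1 = n + s + 2 by omega, hs2, hpas]
          linear_combination -hP + hadd * qhyp q (s + 1) (n + 1) + ihn
        exact hgoal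
    intro n
    have hs2 : qhyp q (s + 2) (n + 1) =
        qhyp q (s + 2) n + q ^ (n + 1) * qhyp q (s + 1) (n + 1) := qhyp_succ (s + 1) n
    have hadd : qint q (n + s + 1 + 1) = qint q (n + 1) + q ^ (n + 1) * qint q (s + 1) := by
      rw [show n + s + 1 + 1 = (n + 1) + (s + 1) by omega, qint_add hq1]
    rw [show n + (s + 1) + 1 = n + s + 1 + 1 by omega,
      show n + (s + 1) = n + s + 1 by omega, hs2]
    linear_combination hadd * qhyp q (s + 2) n - q ^ (n + 1) * hA n

end Helpers

/-- For `q > 0`, `q ≠ 1` and integers `n, r ≥ 1`,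
`[n+r]_q H_n^{(r)}(q) = [n+1]_q H_{n+1}^{(r)}(q) - q^{n+r-1} C(n+r-1, r-1)_q`. -/
theorem qhyp_shift (q : ℝ) (hq : 0 < q) (hq1 : q ≠ 1) (n r : ℕ)
    (hn : 1 ≤ n) (hr : 1 ≤ r) :
    qint q (n + r) * qhyp q r n =
      qint q (n + 1) * qhyp q r (n + 1) -
        q ^ (n + r - 1) * qbinom q (n + r - 1) (r - 1) := by
  obtain ⟨s, rfl⟩ : ∃ s, r = s + 1 := ⟨r - 1, by omega⟩
  rw [show n + (s + 1) - 1 = n + s by omega, show s + 1 - 1 = s by omega,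
    show n + (s + 1) = n + s + 1 by omega]
  exact keyP hq hq1 s n
end

section
/- For all positive integers $n$ and $r$, $\sum_{\ell=1}^{n} \ell\, H_{n-\ell}^{(r)} = \frac{n(n+r)}{r(r+1)} H_n^{(r)} - \frac{(n)^{(r)} \bigl((2r+1)n + r^2\bigr)}{(r-1)!\, r^2 (r+1)^2}$, where $(n)^{(r)} = n(n+1)\cdots(n+r-1)$ denotes the rising factorial. -/
/-- The harmonic number `H_n = ∑_{j=1}^n 1/j`. -/
noncomputable def harm (n : ℕ) : ℝ := ∑ j ∈ Finset.Icc 1 n, (1 : ℝ) / j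

/-- The hyperharmonic numbers: `H_n^{(1)} = H_n` and
`H_n^{(r)} = ∑_{ℓ=1}^n H_ℓ^{(r-1)}` for `r ≥ 2` (so `H_0^{(r)} = 0`). -/
noncomputable def hyp : ℕ → ℕ → ℝ
  | 0, _ => 0
  | 1, n => harm n
  | r + 2, n => ∑ ℓ ∈ Finset.Icc 1 n, hyp (r + 1) ℓ

/-- The rising factorial `(x)^{(m)} = x (x+1) ⋯ (x+m-1)`, with `(x)^{(0)} = 1`. -/
noncomputable def rise (x : ℝ) (m : ℕ) : ℝ := ∏ i ∈ Finset.range m, (x + i)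

lemma harm_zero : harm 0 = 0 := by simp [harm]

lemma harm_succ (n : ℕ) : harm (n+1) = harm n + 1/(n+1 : ℝ) := by
  unfold harm; rw [Finset.sum_Icc_succ_top (by omega)]; push_cast; ring

lemma hyp_zero (r : ℕ) : hyp r 0 = 0 := by
  match r with
  | 0 => rfl
  | 1 => simp [hyp, harm_zero]
  | r+2 => simp [hyp]

lemma hyp_succ (r n : ℕ) : hyp (r+2) (n+1) = hyp (r+2) n + hyp (r+1) (n+1) := by
  show (∑ ℓ ∈ Finset.Icc 1 (n+1), hyp (r+1) ℓ) = _
  rw [Finset.sum_Icc_succ_top (by omega)]; rfl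

lemma hyp_closed (s n : ℕ) :
    hyp (s+1) n = ((n+s).choose s : ℝ) * (harm (n+s) - harm s) := by
  induction s generalizing n with
  | zero => simp [hyp, harm_zero]
  | succ s ih =>
    induction n with
    | zero => simp [hyp_zero]
    | succ n ihn =>
      rw [hyp_succ, ihn, ih (n+1)]
      have keyN : (n+s+2) * (n+s+1).choose s = (n+s+2).choose (s+1) * (s+1) :=
        Nat.add_one_mul_choose_eq (n+s+1) s
      rw [show n+s+2 = (n+s+1)+1 from rfl, Nat.choose_succ_succ (n+s+1) s] at keyN
      have key : ((n:ℝ)+s+2) * ((n+s+1).choose s : ℝ)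
          = (((n+s+1).choose s : ℝ) + ((n+s+1).choose (s+1) : ℝ)) * (s+1) := by
        exact_mod_cast keyN
      have pas : ((n+1+(s+1)).choose (s+1) : ℝ)
          = ((n+s+1).choose s : ℝ) + ((n+s+1).choose (s+1) : ℝ) := by
        rw [show n+1+(s+1) = (n+s+1)+1 by omega]
        exact_mod_cast Nat.choose_succ_succ (n+s+1) s
      rw [show n+1+(s+1) = (n+s+1)+1 by omega, show n+(s+1) = n+s+1 by omega,
        show n+1+s = n+s+1 by omega, harm_succ (n+s+1), harm_succ s]
      rw [Nat.choose_succ_succ (n+s+1) s]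
      have key3 : ((n+s+1).choose s : ℝ) / ((s:ℝ)+1)
          = (((n+s+1).choose s : ℝ) + ((n+s+1).choose (s+1) : ℝ)) / ((n:ℝ)+s+2) := by
        rw [div_eq_div_iff (by positivity) (by positivity)]
        linear_combination key
      push_cast [Nat.succ_eq_add_one] at key3 pas ⊢
      linear_combination key3

lemma sum_hyp (r n : ℕ) (hr : 1 ≤ r) :
    ∑ ℓ ∈ Finset.Icc 1 n, hyp r ℓ = hyp (r+1) n := by
  obtain ⟨s, rfl⟩ := Nat.exists_eq_add_of_le hr
  rw [show 1+s+1 = s+2 by omega, show 1+s = s+1 by omega]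
  rfl

lemma icc_to_range (f : ℕ → ℝ) (n : ℕ) :
    ∑ ℓ ∈ Finset.Icc 1 n, f ℓ = ∑ i ∈ Finset.range n, f (i+1) := by
  rw [show Finset.Icc 1 n = Finset.Ico 1 (n+1) by rw [Finset.Ico_add_one_right_eq_Icc],
    Finset.sum_Ico_eq_sum_range]
  simp [add_comm]

lemma sum_mul_hyp (r k : ℕ) (hr : 1 ≤ r) :
    ∑ ℓ ∈ Finset.Icc 1 (k+1), (ℓ:ℝ) * hyp r (k+1-ℓ) = hyp (r+2) k := by
  induction k with
  | zero => simp [hyp_zero]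
  | succ k ih =>
    rw [icc_to_range] at ih ⊢
    have e1 : ∀ i, ((i+1 : ℕ) : ℝ) * hyp r (k+2-(i+1))
        = hyp r (k+1-i) + (i:ℝ) * hyp r (k+1-i) := by
      intro i
      have : k+2-(i+1) = k+1-i := by omega
      rw [this]; push_cast; ring
    rw [Finset.sum_congr rfl (fun i _ => e1 i), Finset.sum_add_distrib]
    have e2 : ∑ i ∈ Finset.range (k+2), hyp r (k+1-i)
        = hyp (r+1) (k+1) := by
      rw [show (∑ i ∈ Finset.range (k+2), hyp r (k+1-i))
          = ∑ i ∈ Finset.range (k+2), hyp r (k+2-1-i) from rfl,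
        Finset.sum_range_reflect (fun m => hyp r m) (k+2),
        Finset.sum_range_succ', hyp_zero, add_zero, ← icc_to_range, sum_hyp r (k+1) hr]
    have e3 : ∑ i ∈ Finset.range (k+2), (i:ℝ) * hyp r (k+1-i)
        = ∑ i ∈ Finset.range (k+1), ((i+1:ℕ):ℝ) * hyp r (k+1-(i+1)) := by
      rw [Finset.sum_range_succ']
      simp
    rw [e2, e3, ih, hyp_succ]
    ring

lemma rise_fac (k m : ℕ) :
    rise ((k:ℝ)+1) m * (Nat.factorial k : ℝ) = (Nat.factorial (k+m) : ℝ) := by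
  induction m with
  | zero => simp [rise]
  | succ m ih =>
    rw [rise, Finset.prod_range_succ, ← rise, show k+(m+1) = (k+m)+1 from rfl,
      Nat.factorial_succ]
    push_cast
    nlinarith [ih]

/-- For positive integers `n, r`,
`∑_{ℓ=1}^n ℓ H_{n-ℓ}^{(r)} = (n(n+r)/(r(r+1))) H_n^{(r)}
   - (n)^{(r)} ((2r+1)n + r²) / ((r-1)! r² (r+1)²)`. -/
theorem sum_backward_mul_hyp (n r : ℕ) (hn : 1 ≤ n) (hr : 1 ≤ r) :
    ∑ ℓ ∈ Finset.Icc 1 n, (ℓ : ℝ) * hyp r (n - ℓ) =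
      (n : ℝ) * (n + r) / (r * (r + 1)) * hyp r n -
        rise (n : ℝ) r * ((2 * r + 1) * n + (r : ℝ) ^ 2) /
          ((Nat.factorial (r - 1) : ℝ) * r ^ 2 * (r + 1) ^ 2) := by
  obtain ⟨k, rfl⟩ := Nat.exists_eq_add_of_le hn
  obtain ⟨s, rfl⟩ := Nat.exists_eq_add_of_le hr
  rw [show 1+k = k+1 by omega, show 1+s = s+1 by omega] at *
  rw [sum_mul_hyp (s+1) k hr, show s+1+2 = (s+2)+1 from rfl, hyp_closed (s+2) k,
    hyp_closed s (k+1)]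
  -- rewrite choose in terms of factorials
  have hc1 : ((k+(s+2)).choose (s+2) : ℝ)
      = (Nat.factorial (k+s+2) : ℝ) / ((Nat.factorial (s+2) : ℝ) * (Nat.factorial k : ℝ)) := by
    rw [Nat.cast_choose ℝ (by omega), show k+(s+2) = k+s+2 by omega,
      show k+s+2-(s+2) = k by omega]
  have hc2 : ((k+1+s).choose s : ℝ)
      = (Nat.factorial (k+s+1) : ℝ) / ((Nat.factorial s : ℝ) * (Nat.factorial (k+1) : ℝ)) := by
    rw [Nat.cast_choose ℝ (by omega), show k+1+s = k+s+1 by omega,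
      show k+s+1-s = k+1 by omega]
  have hrise : rise (((k+1 : ℕ)):ℝ) (s+1) = (Nat.factorial (k+s+1) : ℝ) / (Nat.factorial k : ℝ) := by
    rw [show (((k+1:ℕ)):ℝ) = (k:ℝ)+1 by push_cast; ring, eq_div_iff (by positivity),
      rise_fac k (s+1), show k+(s+1) = k+s+1 by omega]
  have hH : harm (k+(s+2)) = harm (k+s+1) + 1/((k:ℝ)+s+2) := by
    rw [show k+(s+2) = (k+s+1)+1 by omega, harm_succ]
    push_cast; ring
  have hG : harm (s+2) = harm s + 1/((s:ℝ)+1) + 1/((s:ℝ)+2) := by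
    rw [show s+2 = (s+1)+1 from rfl, harm_succ, harm_succ]
    push_cast; ring
  have hH2 : harm (k+1+s) = harm (k+s+1) := by rw [show k+1+s = k+s+1 by omega]
  have hf2 : (Nat.factorial (s+2) : ℝ) = ((s:ℝ)+2) * ((s:ℝ)+1) * (Nat.factorial s : ℝ) := by
    rw [Nat.factorial_succ, Nat.factorial_succ]; push_cast; ring
  have hf3 : (Nat.factorial (k+s+2) : ℝ) = ((k:ℝ)+s+2) * (Nat.factorial (k+s+1) : ℝ) := by
    rw [show k+s+2 = (k+s+1)+1 from rfl, Nat.factorial_succ]; push_cast; ring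
  have hf4 : (Nat.factorial (k+1) : ℝ) = ((k:ℝ)+1) * (Nat.factorial k : ℝ) := by
    rw [Nat.factorial_succ]; push_cast; ring
  rw [show s+1-1 = s from rfl, hc1, hc2, hrise, hH, hG, hH2, hf2, hf3, hf4]
  have nz1 : (Nat.factorial s : ℝ) ≠ 0 := by positivity
  have nz2 : (Nat.factorial k : ℝ) ≠ 0 := by positivity
  have nz3 : (Nat.factorial (k+s+1) : ℝ) ≠ 0 := by positivity
  have nz4 : ((s:ℝ)+1) ≠ 0 := by positivity
  have nz5 : ((s:ℝ)+2) ≠ 0 := by positivity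
  have nz6 : ((k:ℝ)+1) ≠ 0 := by positivity
  have nz7 : ((k:ℝ)+s+2) ≠ 0 := by positivity
  push_cast
  field_simp
  ring
end
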